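/- For every k ≥ 0 such that σ_k < 1, Broyden's 'good' scheme satisfies r_{k+1} ≤ ((M r_k/(2μ) + σ_k)/(1 − σ_k)) · r_k. -/

import Mathlib

open Matrix MeasureTheory

noncomputable def specNorm {n : ℕ} (A : Matrix (Fin n) (Fin n) ℝ) : ℝ :=
  ‖Matrix.toEuclideanCLM (𝕜 := ℝ) A‖

noncomputable def frobNorm {n : ℕ} (A : Matrix (Fin n) (Fin n) ℝ) : ℝ :=
  Real.sqrt (∑ i, ∑ j, (A i j) ^ 2)

noncomputable def vnorm {n : ℕ} (x : Fin n → ℝ) : ℝ :=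
  Real.sqrt (∑ i, (x i) ^ 2)

variable {n : ℕ}

lemma vnorm_eq (v : Fin n → ℝ) : vnorm v = ‖(WithLp.equiv 2 (Fin n → ℝ)).symm v‖ := by
  rw [EuclideanSpace.norm_eq, vnorm]
  congr 1
  refine Finset.sum_congr rfl fun i _ => ?_
  simp [Real.norm_eq_abs, sq_abs]

lemma vnorm_nonneg (v : Fin n → ℝ) : 0 ≤ vnorm v := Real.sqrt_nonneg _

lemma frobNorm_nonneg (A : Matrix (Fin n) (Fin n) ℝ) : 0 ≤ frobNorm A := Real.sqrt_nonneg _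

lemma vnorm_mulVec_le (A : Matrix (Fin n) (Fin n) ℝ) (v : Fin n → ℝ) :
    vnorm (A *ᵥ v) ≤ specNorm A * vnorm v := by
  rw [vnorm_eq, vnorm_eq, WithLp.equiv_symm_apply, ← Matrix.toEuclideanCLM_toLp]
  exact (Matrix.toEuclideanCLM (𝕜 := ℝ) A).le_opNorm _

lemma vnorm_mulVec_le_frob (A : Matrix (Fin n) (Fin n) ℝ) (v : Fin n → ℝ) :
    vnorm (A *ᵥ v) ≤ frobNorm A * vnorm v := by
  rw [vnorm, vnorm, frobNorm, ← Real.sqrt_mul (by positivity)]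
  apply Real.sqrt_le_sqrt
  rw [Finset.sum_mul]
  refine Finset.sum_le_sum fun i _ => ?_
  simpa [Matrix.mulVec, dotProduct] using
    Finset.sum_mul_sq_le_sq_mul_sq Finset.univ (fun j => A i j) v

lemma specNorm_le_frobNorm (A : Matrix (Fin n) (Fin n) ℝ) : specNorm A ≤ frobNorm A := by
  refine ContinuousLinearMap.opNorm_le_bound _ (frobNorm_nonneg A) fun w => ?_
  have h := vnorm_mulVec_le_frob A (WithLp.equiv 2 (Fin n → ℝ) w)
  rwa [vnorm_eq, vnorm_eq, Equiv.symm_apply_apply, WithLp.equiv_symm_apply, ← Matrix.toEuclideanCLM_toLp] at h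

lemma vnorm_add_le (u v : Fin n → ℝ) : vnorm (u + v) ≤ vnorm u + vnorm v := by
  rw [vnorm_eq, vnorm_eq, vnorm_eq, WithLp.equiv_symm_apply, WithLp.toLp_add]
  exact norm_add_le _ _

lemma vnorm_sub_le (u v : Fin n → ℝ) : vnorm (u - v) ≤ vnorm u + vnorm v := by
  rw [vnorm_eq, vnorm_eq, vnorm_eq, WithLp.equiv_symm_apply, WithLp.toLp_sub]
  exact norm_sub_le _ _

lemma vnorm_smul (c : ℝ) (v : Fin n → ℝ) : vnorm (c • v) = |c| * vnorm v := by
  rw [vnorm_eq, vnorm_eq, WithLp.equiv_symm_apply, WithLp.toLp_smul, norm_smul, Real.norm_eq_abs]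

lemma specNorm_neg (A : Matrix (Fin n) (Fin n) ℝ) : specNorm (-A) = specNorm A := by
  rw [specNorm, specNorm, map_neg, norm_neg]
noncomputable def intJac {n : ℕ} (J : (Fin n → ℝ) → Matrix (Fin n) (Fin n) ℝ)
    (x u : Fin n → ℝ) : Matrix (Fin n) (Fin n) ℝ :=
  Matrix.of fun i j => ∫ t in (0:ℝ)..(1:ℝ), J (x + t • u) i j

lemma entry_cont {n : ℕ} {J : (Fin n → ℝ) → Matrix (Fin n) (Fin n) ℝ} (hJc : Continuous J)
    (x0 e : Fin n → ℝ) (i j : Fin n) : Continuous fun t : ℝ => J (x0 + t • e) i j := by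
  have hline : Continuous fun t : ℝ => x0 + t • e := by continuity
  exact ((continuous_apply j).comp ((continuous_apply i).comp (hJc.comp hline)))

lemma ftc {n : ℕ} (F : (Fin n → ℝ) → (Fin n → ℝ)) (J : (Fin n → ℝ) → Matrix (Fin n) (Fin n) ℝ)
    (hF : ∀ z, HasFDerivAt F (LinearMap.toContinuousLinearMap ((J z).mulVecLin)) z)
    (hJc : Continuous J) (x0 e : Fin n → ℝ) :
    F (x0 + e) - F x0 = intJac J x0 e *ᵥ e := by
  have hline : ∀ t : ℝ, HasDerivAt (fun t : ℝ => x0 + t • e) e t := fun t => by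
    simpa using ((hasDerivAt_id t).smul_const e).const_add x0
  have hcomp : ∀ t : ℝ, HasDerivAt (fun t => F (x0 + t • e)) ((J (x0 + t • e)) *ᵥ e) t := by
    intro t
    have h := (hF (x0 + t • e)).comp_hasDerivAt t (hline t)
    simpa [Function.comp_def] using h
  funext i
  have hderiv : ∀ t ∈ Set.uIcc (0:ℝ) 1,
      HasDerivAt (fun t => F (x0 + t • e) i) (((J (x0 + t • e)) *ᵥ e) i) t :=
    fun t _ => hasDerivAt_pi.1 (hcomp t) i
  have hci : Continuous fun t : ℝ => ((J (x0 + t • e)) *ᵥ e) i := by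
    simp only [Matrix.mulVec, dotProduct]
    exact continuous_finset_sum _ fun j _ => (entry_cont hJc x0 e i j).mul continuous_const
  have key := intervalIntegral.integral_eq_sub_of_hasDerivAt hderiv (hci.intervalIntegrable 0 1)
  have swap : (∫ t in (0:ℝ)..1, ((J (x0 + t • e)) *ᵥ e) i)
      = ∑ j, (∫ t in (0:ℝ)..1, J (x0 + t • e) i j) * e j := by
    simp only [Matrix.mulVec, dotProduct]
    rw [intervalIntegral.integral_finset_sum]
    · exact Finset.sum_congr rfl fun j _ => intervalIntegral.integral_mul_const _ _
    · exact fun j _ => ((entry_cont hJc x0 e i j).mul continuous_const).intervalIntegrable _ _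
  rw [swap] at key
  simp only [one_smul, zero_smul, add_zero] at key
  simp only [Pi.sub_apply]
  rw [← key]
  simp [intJac, Matrix.mulVec, dotProduct]

lemma intbound {n : ℕ} (J : (Fin n → ℝ) → Matrix (Fin n) (Fin n) ℝ) (hJc : Continuous J)
    (xs e : Fin n → ℝ) (M : ℝ) (hM : 0 ≤ M)
    (hLip : ∀ z, specNorm (J z - J xs) ≤ M * vnorm (z - xs)) :
    vnorm ((J xs - intJac J xs e) *ᵥ e) ≤ M * vnorm e ^ 2 / 2 := by
  set K : ℝ → Matrix (Fin n) (Fin n) ℝ := fun t => J xs - J (xs + t • e) with hK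
  have hKc : ∀ i j, Continuous fun t => K t i j := fun i j => by
    simpa [hK, Matrix.sub_apply, Pi.sub_def] using continuous_const.sub (entry_cont hJc xs e i j)
  set Φ : ℝ → EuclideanSpace ℝ (Fin n) :=
    fun t => (WithLp.equiv 2 (Fin n → ℝ)).symm (K t *ᵥ e) with hΦ
  have hΦc : Continuous Φ := by
    refine Continuous.comp ((PiLp.continuousLinearEquiv 2 ℝ
      (fun _ : Fin n => ℝ)).symm.continuous) (continuous_pi fun i => ?_)
    simp only [Matrix.mulVec, dotProduct]
    exact continuous_finset_sum _ fun j _ => (hKc i j).mul continuous_const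
  have hΦint : IntervalIntegrable Φ volume 0 1 := hΦc.intervalIntegrable 0 1
  have hI : (WithLp.equiv 2 (Fin n → ℝ)).symm ((J xs - intJac J xs e) *ᵥ e)
      = ∫ t in (0:ℝ)..1, Φ t := by
    ext i
    have hproj := (EuclideanSpace.proj (𝕜 := ℝ) i).intervalIntegral_comp_comm hΦint
    have h1 : (∫ t in (0:ℝ)..1, Φ t) i = ∫ t in (0:ℝ)..1, (K t *ᵥ e) i := by
      rw [show (∫ t in (0:ℝ)..1, Φ t) i
        = (EuclideanSpace.proj (𝕜 := ℝ) i) (∫ t in (0:ℝ)..1, Φ t) from rfl, ← hproj]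
      rfl
    have h2 : (∫ t in (0:ℝ)..1, (K t *ᵥ e) i)
        = ∑ j, (∫ t in (0:ℝ)..1, K t i j) * e j := by
      simp only [Matrix.mulVec, dotProduct]
      rw [intervalIntegral.integral_finset_sum]
      · exact Finset.sum_congr rfl fun j _ => intervalIntegral.integral_mul_const _ _
      · exact fun j _ => ((hKc i j).mul continuous_const).intervalIntegrable _ _
    have h3 : ∀ j, (∫ t in (0:ℝ)..1, K t i j) = (J xs - intJac J xs e) i j := by
      intro j
      have : (fun t => K t i j) = fun t => J xs i j - J (xs + t • e) i j := rfl
      rw [this, intervalIntegral.integral_sub (intervalIntegrable_const)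
        ((entry_cont hJc xs e i j).intervalIntegrable 0 1)]
      simp [intJac]
    show ((J xs - intJac J xs e) *ᵥ e) i = _
    rw [h1, h2]
    simp only [Matrix.mulVec, dotProduct]
    exact Finset.sum_congr rfl fun j _ => by rw [h3 j]
  have hbound : ‖∫ t in (0:ℝ)..1, Φ t‖ ≤ |∫ t in (0:ℝ)..1, M * vnorm e ^ 2 * t| := by
    apply intervalIntegral.norm_integral_le_abs_of_norm_le
    · filter_upwards [ae_restrict_mem measurableSet_uIoc] with t ht
      rw [Set.uIoc_of_le zero_le_one] at ht
      have h1 : ‖Φ t‖ = vnorm (K t *ᵥ e) := (vnorm_eq _).symm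
      rw [h1]
      calc vnorm (K t *ᵥ e) ≤ specNorm (K t) * vnorm e := vnorm_mulVec_le _ _
        _ ≤ (M * vnorm (t • e)) * vnorm e := by
            apply mul_le_mul_of_nonneg_right _ (vnorm_nonneg e)
            have : K t = -(J (xs + t • e) - J xs) := by simp [hK]
            rw [this, specNorm_neg]
            simpa using hLip (xs + t • e)
        _ = M * vnorm e ^ 2 * t := by
            rw [vnorm_smul, abs_of_pos ht.1]; ring
    · exact (Continuous.intervalIntegrable (by continuity) 0 1)
  have hval : (∫ t in (0:ℝ)..1, M * vnorm e ^ 2 * t) = M * vnorm e ^ 2 / 2 := by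
    rw [intervalIntegral.integral_const_mul, integral_id]
    ring
  rw [vnorm_eq, hI]
  calc ‖∫ t in (0:ℝ)..1, Φ t‖ ≤ |∫ t in (0:ℝ)..1, M * vnorm e ^ 2 * t| := hbound
    _ = M * vnorm e ^ 2 / 2 := by
        rw [hval, abs_of_nonneg (by positivity)]
/-- For Broyden's "good" scheme, whenever `σ_k < 1` one has
`r_{k+1} ≤ ((M r_k/(2μ) + σ_k)/(1 − σ_k)) · r_k`. -/
theorem stmt5 {n : ℕ} (F : (Fin n → ℝ) → (Fin n → ℝ))
    (J : (Fin n → ℝ) → Matrix (Fin n) (Fin n) ℝ)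
    (hF : ∀ z, HasFDerivAt F (LinearMap.toContinuousLinearMap ((J z).mulVecLin)) z)
    (hJc : Continuous J)
    (xs : Fin n → ℝ) (hxs : F xs = 0) (hJs : IsUnit (J xs).det)
    (μ : ℝ) (hμ : μ = 1 / specNorm ((J xs)⁻¹))
    (M : ℝ) (hM : 0 ≤ M)
    (hLip : ∀ z, specNorm (J z - J xs) ≤ M * vnorm (z - xs))
    (x : ℕ → Fin n → ℝ) (B : ℕ → Matrix (Fin n) (Fin n) ℝ)
    (hBk : ∀ k, IsUnit (B k).det) (hFk : ∀ k, F (x k) ≠ 0)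
    (hx : ∀ k, x (k + 1) = x k - (B k)⁻¹ *ᵥ F (x k))
    (hB : ∀ k, B (k + 1) = B k + ((x (k + 1) - x k) ⬝ᵥ (x (k + 1) - x k))⁻¹ •
        vecMulVec (F (x (k + 1)) - F (x k) - B k *ᵥ (x (k + 1) - x k)) (x (k + 1) - x k)) :
    ∀ k : ℕ, frobNorm ((J xs)⁻¹ * (B k - J xs)) < 1 →
      vnorm (x (k + 1) - xs) ≤
        (M * vnorm (x k - xs) / (2 * μ) + frobNorm ((J xs)⁻¹ * (B k - J xs)))
          / (1 - frobNorm ((J xs)⁻¹ * (B k - J xs))) * vnorm (x k - xs) := by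
  intro k hσ
  rcases Nat.eq_zero_or_pos n with hn | hn
  · subst hn
    simp [vnorm]
  set A := J xs with hA
  set e := x k - xs with he
  set e' := x (k + 1) - xs with he'
  set G := intJac J xs e with hG
  set σ := frobNorm (A⁻¹ * (B k - A)) with hσdef
  -- Step 1 : B_k (x_{k+1} - x_k) = -F(x_k)
  have hstep : B k *ᵥ (x (k + 1) - x k) = -(F (x k)) := by
    have h1 : x (k + 1) - x k = -((B k)⁻¹ *ᵥ F (x k)) := by rw [hx k]; ring
    rw [h1, Matrix.mulVec_neg, Matrix.mulVec_mulVec, Matrix.mul_nonsing_inv _ (hBk k),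
      Matrix.one_mulVec]
  -- Step 2 : F(x_k) = G e
  have hFeq : F (x k) = G *ᵥ e := by
    have h := ftc F J hF hJc xs e
    have h2 : xs + e = x k := by rw [he]; ring
    rw [h2, hxs, sub_zero] at h
    exact h
  -- Step 3
  have h3 : A *ᵥ e' = (B k - A) *ᵥ e - (B k - A) *ᵥ e' + (A - G) *ᵥ e := by
    have hBe' : B k *ᵥ e' = B k *ᵥ e - G *ᵥ e := by
      have hsplit : e' = e + (x (k + 1) - x k) := by rw [he, he']; ring
      rw [hsplit, Matrix.mulVec_add, hstep, hFeq]
      abel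
    have hAe' : A *ᵥ e' = B k *ᵥ e' - (B k - A) *ᵥ e' := by
      rw [Matrix.sub_mulVec]; abel
    rw [hAe', hBe']
    simp only [Matrix.sub_mulVec]
    abel
  -- Step 4
  have h4 : e' = (A⁻¹ * (B k - A)) *ᵥ e - (A⁻¹ * (B k - A)) *ᵥ e'
      + A⁻¹ *ᵥ ((A - G) *ᵥ e) := by
    have h5 : e' = A⁻¹ *ᵥ (A *ᵥ e') := by
      rw [Matrix.mulVec_mulVec, Matrix.nonsing_inv_mul _ hJs, Matrix.one_mulVec]
    conv_lhs => rw [h5, h3]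
    rw [Matrix.mulVec_add, Matrix.mulVec_sub, Matrix.mulVec_mulVec, Matrix.mulVec_mulVec]
  -- Norm inequality
  have hineq : vnorm e' ≤ σ * vnorm e + σ * vnorm e'
      + specNorm A⁻¹ * (M * vnorm e ^ 2 / 2) := by
    conv_lhs => rw [h4]
    refine le_trans (vnorm_add_le _ _) (add_le_add (le_trans (vnorm_sub_le _ _)
      (add_le_add (vnorm_mulVec_le_frob _ _) (vnorm_mulVec_le_frob _ _))) ?_)
    refine le_trans (vnorm_mulVec_le _ _) ?_
    exact mul_le_mul_of_nonneg_left (intbound J hJc xs e M hM hLip) (norm_nonneg _)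
  -- positivity of specNorm A⁻¹
  have hs : 0 < specNorm A⁻¹ := by
    rcases (norm_nonneg (Matrix.toEuclideanCLM (𝕜 := ℝ) A⁻¹)).lt_or_eq with h | h
    · exact h
    · exfalso
      have h0 : Matrix.toEuclideanCLM (𝕜 := ℝ) A⁻¹ = 0 := by
        rw [← norm_eq_zero]; exact h.symm
      have hA0 : A⁻¹ = 0 := by
        have h2 : Matrix.toEuclideanCLM (𝕜 := ℝ) A⁻¹
            = Matrix.toEuclideanCLM (𝕜 := ℝ) (0 : Matrix (Fin n) (Fin n) ℝ) := by
          rw [h0, map_zero]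
        exact EquivLike.injective _ h2
      have hone : (1 : Matrix (Fin n) (Fin n) ℝ) = A * A⁻¹ :=
        (Matrix.mul_nonsing_inv _ hJs).symm
      rw [hA0, Matrix.mul_zero] at hone
      have i0 : Fin n := ⟨0, hn⟩
      have := congrFun (congrFun hone i0) i0
      simp at this
  have h1σ : (0:ℝ) < 1 - σ := by linarith
  set s := specNorm A⁻¹ with hsdef
  rw [hμ]
  rw [div_mul_eq_mul_div, le_div_iff₀ h1σ]
  have hdiv : M * vnorm e / (2 * (1 / s)) = s * (M * vnorm e) / 2 := by
    field_simp
  rw [hdiv]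
  nlinarith [hineq, vnorm_nonneg e, vnorm_nonneg e']
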